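/- arXiv:1810.00527 — 3 statements merged into one kernel-verified Lean document; each statement's English description precedes it below -/
import Mathlib

section
/- Let σ : ℕ → P be a switching signal with average dwell-time N_a > 0 and chatter bound N_0, i.e., the number of switches N_σ(k, k̲) on any interval [k̲, k) satisfies N_σ(k, k̲) ≤ N_0 + (k − k̲)/N_a. Suppose a sequence (v_k) of nonnegative reals satisfies v_{k+1} ≤ λ v_k (0 < λ < 1) at non-switching times and v_{k+1} ≤ μ λ v_k (μ ≥ 1) at switching times. If N_a ≥ ln μ / ln(ε/λ) for some ε ∈ (λ, 1), then v_k ≤ μ^{N_0} ε^k v_0 for all k ∈ ℕ. -/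
/-- average dwell-time bound — under the dwell-time condition
N_a ≥ ln μ / ln(ε/λ), Lyapunov values decay as v_k ≤ μ^{N_0} ε^k v_0. -/
theorem stmt7 {P : Type*} [DecidableEq P] (σ : ℕ → P)
    (N0 Na : ℝ) (hNa : 0 < Na)
    (hdwell : ∀ kl k : ℕ, kl ≤ k →
      ((((Finset.Ico kl k).filter fun j => σ (j + 1) ≠ σ j).card : ℝ)
        ≤ N0 + ((k : ℝ) - (kl : ℝ)) / Na))
    (v : ℕ → ℝ) (hv : ∀ k, 0 ≤ v k)
    (lam μ ε : ℝ) (hlam0 : 0 < lam) (hlam1 : lam < 1)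
    (hμ : 1 ≤ μ) (hε1 : lam < ε) (hε2 : ε < 1) (hN0 : 0 ≤ N0)
    (hrec1 : ∀ k, σ (k + 1) = σ k → v (k + 1) ≤ lam * v k)
    (hrec2 : ∀ k, σ (k + 1) ≠ σ k → v (k + 1) ≤ μ * (lam * v k))
    (hNabound : Na ≥ Real.log μ / Real.log (ε / lam)) :
    ∀ k : ℕ, v k ≤ Real.rpow μ N0 * ε ^ k * v 0 := by
  have hμ0 : (0:ℝ) < μ := lt_of_lt_of_le one_pos hμ
  have hε0 : (0:ℝ) < ε := lt_trans hlam0 hε1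
  -- Step 1: raw bound with the switch count
  have key : ∀ k : ℕ,
      v k ≤ μ ^ ((Finset.Ico 0 k).filter fun j => σ (j + 1) ≠ σ j).card
        * lam ^ k * v 0 := by
    intro k
    induction k with
    | zero => simp
    | succ k ih =>
      have hrange : Finset.Ico 0 (k+1) = insert k (Finset.Ico 0 k) := by
        simp [Finset.range_add_one, ← Finset.range_eq_Ico]
      rw [hrange, Finset.filter_insert]
      set N := ((Finset.Ico 0 k).filter fun j => σ (j + 1) ≠ σ j).card with hN
      have hnn : 0 ≤ μ ^ N * lam ^ k * v 0 :=
        mul_nonneg (mul_nonneg (pow_nonneg hμ0.le _) (pow_nonneg hlam0.le _)) (hv 0)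
      by_cases h : σ (k+1) = σ k
      · rw [if_neg (by simpa using h)]
        calc v (k+1) ≤ lam * v k := hrec1 k h
          _ ≤ lam * (μ ^ N * lam ^ k * v 0) :=
            mul_le_mul_of_nonneg_left ih hlam0.le
          _ = μ ^ N * lam ^ (k+1) * v 0 := by ring
      · rw [if_pos (by simpa using h), Finset.card_insert_of_notMem (by simp)]
        calc v (k+1) ≤ μ * (lam * v k) := hrec2 k h
          _ ≤ μ * (lam * (μ ^ N * lam ^ k * v 0)) := by
            apply mul_le_mul_of_nonneg_left _ hμ0.le
            exact mul_le_mul_of_nonneg_left ih hlam0.le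
          _ = μ ^ (N+1) * lam ^ (k+1) * v 0 := by ring
  -- Step 2: analytic bounds
  have hgt1 : 1 < ε / lam := (one_lt_div hlam0).mpr hε1
  have hlogpos : 0 < Real.log (ε / lam) := Real.log_pos hgt1
  have hlog : Real.log μ ≤ Na * Real.log (ε / lam) :=
    (div_le_iff₀ hlogpos).mp hNabound
  intro k
  set N := ((Finset.Ico 0 k).filter fun j => σ (j + 1) ≠ σ j).card with hNdef
  have hNbd : (N : ℝ) ≤ N0 + (k : ℝ) / Na := by
    have h := hdwell 0 k (Nat.zero_le k)
    simp only [Nat.cast_zero, sub_zero] at h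
    exact h
  -- μ^N ≤ μ^N0 * μ^(k/Na) (rpow)
  have h1 : (μ : ℝ) ^ N ≤ Real.rpow μ N0 * Real.rpow μ ((k : ℝ) / Na) := by
    show (μ : ℝ) ^ N ≤ μ ^ N0 * μ ^ ((k : ℝ) / Na)
    rw [← Real.rpow_add hμ0, ← Real.rpow_natCast μ N]
    exact Real.rpow_le_rpow_of_exponent_le hμ hNbd
  -- μ^(k/Na) * lam^k ≤ ε^k
  have h2 : Real.rpow μ ((k : ℝ) / Na) * lam ^ k ≤ ε ^ k := by
    have hrk : Real.rpow μ ((k : ℝ) / Na) ≤ (ε / lam) ^ k := by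
      show μ ^ ((k : ℝ) / Na) ≤ (ε / lam) ^ k
      rw [Real.rpow_def_of_pos hμ0]
      have hexp : Real.log μ * ((k : ℝ) / Na) ≤ Real.log (ε / lam) * k := by
        have h' := mul_le_mul_of_nonneg_right hlog
          (div_nonneg (Nat.cast_nonneg k) hNa.le)
        calc Real.log μ * ((k : ℝ) / Na)
            ≤ Na * Real.log (ε / lam) * ((k : ℝ) / Na) := h'
          _ = Real.log (ε / lam) * k := by field_simp
      calc Real.exp (Real.log μ * ((k : ℝ) / Na))
          ≤ Real.exp (Real.log (ε / lam) * k) := Real.exp_le_exp.mpr hexp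
        _ = (ε / lam) ^ k := by
            rw [mul_comm, Real.exp_nat_mul, Real.exp_log (div_pos hε0 hlam0)]
    calc Real.rpow μ ((k : ℝ) / Na) * lam ^ k
        ≤ (ε / lam) ^ k * lam ^ k :=
          mul_le_mul_of_nonneg_right hrk (pow_nonneg hlam0.le _)
      _ = ε ^ k := by
          rw [div_pow, div_mul_eq_mul_div, mul_div_assoc,
            div_self (pow_ne_zero _ hlam0.ne'), mul_one]
  calc v k ≤ μ ^ N * lam ^ k * v 0 := key k
    _ ≤ (Real.rpow μ N0 * Real.rpow μ ((k : ℝ) / Na)) * lam ^ k * v 0 := by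
        apply mul_le_mul_of_nonneg_right _ (hv 0)
        exact mul_le_mul_of_nonneg_right h1 (pow_nonneg hlam0.le _)
    _ = Real.rpow μ N0 * (Real.rpow μ ((k : ℝ) / Na) * lam ^ k) * v 0 := by ring
    _ ≤ Real.rpow μ N0 * ε ^ k * v 0 := by
        apply mul_le_mul_of_nonneg_right _ (hv 0)
        exact mul_le_mul_of_nonneg_left h2 (Real.rpow_nonneg hμ0.le _)
end

section
/- Let 0 < λ < 1, μ ≥ 1, ε ∈ (λ, 1), and define N̄_a = ln μ / ln(ε/λ). Then N̄_a ≥ 0, and for any N_a ≥ N̄_a and any k̲ ≤ k with number of switches N ≤ N_0 + (k − k̲)/N_a, one has μ^N λ^{k − k̲} ≤ μ^{N_0} ε^{k − k̲}. -/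
/-- arithmetic core of the average dwell-time theorem. -/
theorem stmt13 (lam μ ε N0 Na : ℝ)
    (hlam0 : 0 < lam) (hlam1 : lam < 1) (hμ : 1 ≤ μ)
    (hε1 : lam < ε) (hε2 : ε < 1) (hN0 : 0 ≤ N0) (hNa : 0 < Na)
    (hNabound : Na ≥ Real.log μ / Real.log (ε / lam)) :
    0 ≤ Real.log μ / Real.log (ε / lam) ∧
    ∀ (kl k N : ℕ), kl ≤ k → ((N : ℝ) ≤ N0 + ((k : ℝ) - (kl : ℝ)) / Na) →
      μ ^ N * lam ^ (k - kl) ≤ Real.rpow μ N0 * ε ^ (k - kl) := by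
  have hμ0 : (0:ℝ) < μ := lt_of_lt_of_le one_pos hμ
  have hratio : (1:ℝ) < ε / lam := (one_lt_div hlam0).2 hε1
  have hlog : 0 < Real.log (ε / lam) := Real.log_pos hratio
  have hlogμ : 0 ≤ Real.log μ := Real.log_nonneg hμ
  constructor
  · exact div_nonneg hlogμ hlog.le
  intro kl k N hkl hN
  set m : ℕ := k - kl with hm
  have hmr : ((m : ℝ)) = (k : ℝ) - (kl : ℝ) := by
    simp [hm, Nat.cast_sub hkl]
  -- key: μ^(1/Na) * lam ≤ ε
  have hkey : μ ^ (1 / Na) * lam ≤ ε := by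
    have h1 : Real.log μ ≤ Na * Real.log (ε / lam) := by
      rw [ge_iff_le, div_le_iff₀ hlog] at hNabound
      exact hNabound
    have h2 : μ ^ (1 / Na) ≤ ε / lam := by
      rw [← Real.log_le_log_iff (Real.rpow_pos_of_pos hμ0 _) (by positivity),
        Real.log_rpow hμ0]
      calc 1 / Na * Real.log μ ≤ 1 / Na * (Na * Real.log (ε / lam)) := by
            apply mul_le_mul_of_nonneg_left h1 (by positivity)
        _ = Real.log (ε / lam) := by field_simp
    calc μ ^ (1 / Na) * lam ≤ ε / lam * lam :=
          mul_le_mul_of_nonneg_right h2 hlam0.le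
      _ = ε := by field_simp
  have hpow : μ ^ (N : ℝ) ≤ μ ^ (N0 + (m : ℝ) / Na) := by
    apply Real.rpow_le_rpow_of_exponent_le hμ
    rw [hmr]; exact hN
  calc μ ^ N * lam ^ m = μ ^ (N : ℝ) * lam ^ m := by
        rw [Real.rpow_natCast]
    _ ≤ μ ^ (N0 + (m : ℝ) / Na) * lam ^ m := by
        apply mul_le_mul_of_nonneg_right hpow (by positivity)
    _ = μ ^ N0 * ((μ ^ (1 / Na)) ^ m * lam ^ m) := by
        rw [Real.rpow_add hμ0, ← Real.rpow_natCast (μ ^ (1/Na)) m,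
          ← Real.rpow_mul hμ0.le]
        ring_nf
    _ = μ ^ N0 * (μ ^ (1 / Na) * lam) ^ m := by rw [mul_pow]
    _ ≤ μ ^ N0 * ε ^ m := by
        apply mul_le_mul_of_nonneg_left _ (Real.rpow_pos_of_pos hμ0 _).le
        exact pow_le_pow_left₀ (by positivity) hkey m
    _ = Real.rpow μ N0 * ε ^ m := rfl
end

section
/- Let (v_k) be nonnegative reals, 0 < λ < 1, μ ≥ 1, c ≥ 0, and suppose v_{k+1} ≤ λ v_k + c at non-switching times and v_{k+1} ≤ μ(λ v_k + c) at switching times, where the switching signal has at most N_0 + (k − k̲)/N_a switches in [k̲, k) with N_a ≥ ln μ / ln(ε/λ) for some ε ∈ (λ, 1). Then v_k ≤ μ^{N_0} ε^k v_0 + C c for all k, where C is a constant depending only on λ, μ, ε, N_0. -/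
/-- perturbed average dwell-time estimate with ultimate bound
v_k ≤ μ^{N_0} ε^k v_0 + C c. -/
theorem stmt14 {P : Type*} [DecidableEq P]
    (lam μ ε N0 Na c : ℝ)
    (hlam0 : 0 < lam) (hlam1 : lam < 1) (hμ : 1 ≤ μ)
    (hε1 : lam < ε) (hε2 : ε < 1) (hN0 : 0 ≤ N0) (hNa : 0 < Na)
    (hc : 0 ≤ c)
    (hNabound : Na ≥ Real.log μ / Real.log (ε / lam)) :
    ∃ C : ℝ, 0 ≤ C ∧
      ∀ (σ : ℕ → P) (v : ℕ → ℝ),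
        (∀ k, 0 ≤ v k) →
        (∀ kl k : ℕ, kl ≤ k →
          ((((Finset.Ico kl k).filter fun j => σ (j + 1) ≠ σ j).card : ℝ)
            ≤ N0 + ((k : ℝ) - (kl : ℝ)) / Na)) →
        (∀ k, σ (k + 1) = σ k → v (k + 1) ≤ lam * v k + c) →
        (∀ k, σ (k + 1) ≠ σ k → v (k + 1) ≤ μ * (lam * v k + c)) →
        ∀ k : ℕ, v k ≤ Real.rpow μ N0 * ε ^ k * v 0 + C * c := by
  have hε0 : 0 < ε := lt_trans hlam0 hε1
  have hεlam : 1 < ε / lam := (one_lt_div hlam0).2 hε1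
  have hεlam0 : (0:ℝ) < ε / lam := by positivity
  have hμ0 : (0:ℝ) < μ := lt_of_lt_of_le one_pos hμ
  have hlog : 0 < Real.log (ε / lam) := Real.log_pos hεlam
  have hroot : μ ^ ((1:ℝ) / Na) ≤ ε / lam := by
    have h1 : Real.log μ / Real.log (ε / lam) ≤ Na := hNabound
    have h2 : Real.log μ ≤ Na * Real.log (ε / lam) := by
      rw [div_le_iff₀ hlog] at h1; linarith
    rw [Real.rpow_def_of_pos hμ0]
    have h3 : Real.log μ * (1 / Na) ≤ Real.log (ε / lam) := by
      rw [mul_one_div, div_le_iff₀ hNa]; linarith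
    calc Real.exp (Real.log μ * (1 / Na)) ≤ Real.exp (Real.log (ε / lam)) :=
          Real.exp_le_exp.2 h3
      _ = ε / lam := Real.exp_log hεlam0
  set M : ℝ := Real.rpow μ N0 with hM
  have hM0 : 0 < M := Real.rpow_pos_of_pos hμ0 N0
  have key : ∀ (x : ℝ) (m : ℕ), x ≤ N0 + (m : ℝ) / Na →
      μ ^ x ≤ M * (ε / lam) ^ m := by
    intro x m hx
    have h1 : μ ^ x ≤ μ ^ (N0 + (m : ℝ) / Na) :=
      Real.rpow_le_rpow_of_exponent_le hμ hx
    have h2 : μ ^ (N0 + (m : ℝ) / Na)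
        = M * μ ^ ((m : ℝ) / Na) := Real.rpow_add hμ0 _ _
    have h3 : μ ^ ((m : ℝ) / Na) = (μ ^ ((1:ℝ) / Na)) ^ m := by
      rw [← Real.rpow_natCast (μ ^ ((1:ℝ) / Na)) m, ← Real.rpow_mul hμ0.le]
      congr 1
      ring
    have h4 : (μ ^ ((1:ℝ) / Na)) ^ m ≤ (ε / lam) ^ m :=
      pow_le_pow_left₀ (Real.rpow_nonneg hμ0.le _) hroot m
    calc μ ^ x ≤ M * μ ^ ((m : ℝ) / Na) := by rw [← h2]; exact h1
      _ = M * (μ ^ ((1:ℝ) / Na)) ^ m := by rw [h3]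
      _ ≤ M * (ε / lam) ^ m := by
          exact mul_le_mul_of_nonneg_left h4 hM0.le
  have h1ε : (0:ℝ) < 1 - ε := by linarith
  refine ⟨M * (ε / lam) * (1 / (1 - ε)),
    mul_nonneg (mul_nonneg hM0.le hεlam0.le) (by positivity), ?_⟩
  intro σ v hv hsw hns hs
  set N : ℕ → ℕ → ℕ := fun a b =>
    ((Finset.Ico a b).filter fun j => σ (j + 1) ≠ σ j).card with hN
  set s : ℕ → ℕ := fun k => if σ (k + 1) ≠ σ k then 1 else 0 with hsdef
  have hrec : ∀ k, v (k + 1) ≤ μ ^ (s k) * (lam * v k + c) := by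
    intro k
    by_cases h : σ (k + 1) = σ k
    · simp only [hsdef, h, ne_eq, not_true_eq_false, if_false, pow_zero, one_mul]
      exact hns k h
    · simp only [hsdef, h, ne_eq, not_false_eq_true, if_true, pow_one]
      exact hs k h
  have hNstep : ∀ j k : ℕ, j ≤ k → N j (k + 1) = N j k + s k := by
    intro j k hjk
    simp only [hN, hsdef]
    rw [Nat.Ico_succ_right_eq_insert_Ico hjk, Finset.filter_insert]
    by_cases h : σ (k + 1) = σ k
    · simp [h]
    · simp only [h, ne_eq, not_false_eq_true, if_true]
      rw [Finset.card_insert_of_notMem (by simp)]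
  have main : ∀ k, v k ≤ (μ : ℝ) ^ (N 0 k) * lam ^ k * v 0 +
      c * ∑ j ∈ Finset.range k, lam ^ (k - 1 - j) * μ ^ (N j k) := by
    intro k
    induction k with
    | zero => simp [hN]
    | succ k ih =>
      have hμs : (0:ℝ) < μ ^ (s k) := pow_pos hμ0 _
      have step1 : v (k + 1) ≤ μ ^ (s k) * (lam *
          ((μ : ℝ) ^ (N 0 k) * lam ^ k * v 0 +
            c * ∑ j ∈ Finset.range k, lam ^ (k - 1 - j) * μ ^ (N j k)) + c) := by
        refine (hrec k).trans (mul_le_mul_of_nonneg_left ?_ hμs.le)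
        have := mul_le_mul_of_nonneg_left ih hlam0.le
        linarith
      have hsum : ∑ j ∈ Finset.range (k + 1), lam ^ (k - j) * μ ^ (N j (k + 1))
          = μ ^ (s k) * lam *
              (∑ j ∈ Finset.range k, lam ^ (k - 1 - j) * μ ^ (N j k))
            + μ ^ (s k) := by
        rw [Finset.sum_range_succ]
        have h1 : N k (k + 1) = s k := by
          have := hNstep k k le_rfl
          simpa [hN] using this
        have h2 : ∀ j ∈ Finset.range k,
            lam ^ (k - j) * μ ^ (N j (k + 1))
              = μ ^ (s k) * lam * (lam ^ (k - 1 - j) * μ ^ (N j k)) := by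
          intro j hj
          rw [Finset.mem_range] at hj
          rw [hNstep j k hj.le]
          have hkj : k - j = (k - 1 - j) + 1 := by omega
          rw [hkj, pow_succ, pow_add]
          ring
        rw [Finset.sum_congr rfl h2, ← Finset.mul_sum]
        simp [h1]
      have hA : (μ : ℝ) ^ (N 0 (k + 1)) * lam ^ (k + 1) * v 0
          = μ ^ (s k) * lam * ((μ : ℝ) ^ (N 0 k) * lam ^ k * v 0) := by
        rw [hNstep 0 k (Nat.zero_le k), pow_add, pow_succ]
        ring
      have hkk : ∀ j : ℕ, k + 1 - 1 - j = k - j := by intro j; omega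
      calc v (k + 1) ≤ _ := step1
        _ = (μ : ℝ) ^ (N 0 (k + 1)) * lam ^ (k + 1) * v 0 +
            c * ∑ j ∈ Finset.range (k + 1), lam ^ (k - j) * μ ^ (N j (k + 1)) := by
              rw [hsum, hA]; ring
        _ = (μ : ℝ) ^ (N 0 (k + 1)) * lam ^ (k + 1) * v 0 +
            c * ∑ j ∈ Finset.range (k + 1),
              lam ^ (k + 1 - 1 - j) * μ ^ (N j (k + 1)) := by
              simp only [hkk]
  intro k
  have hgeom : ∑ j ∈ Finset.range k, ε ^ j ≤ 1 / (1 - ε) := by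
    rw [geom_sum_eq hε2.ne]
    have heq : (ε ^ k - 1) / (ε - 1) = (1 - ε ^ k) / (1 - ε) := by
      rw [div_eq_div_iff (by linarith : ε - 1 ≠ 0) (by linarith : (1:ℝ) - ε ≠ 0)]
      ring
    rw [heq, div_le_div_iff₀ h1ε h1ε]
    have hεk : 0 ≤ ε ^ k := pow_nonneg hε0.le k
    nlinarith
  have hterm1 : (μ : ℝ) ^ (N 0 k) * lam ^ k * v 0 ≤ M * ε ^ k * v 0 := by
    have h2 : μ ^ (((N 0 k : ℕ) : ℝ)) ≤ M * (ε / lam) ^ k := by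
      apply key _ k
      have := hsw 0 k (Nat.zero_le k)
      simpa [hN] using this
    have h3 : (μ : ℝ) ^ (N 0 k) * lam ^ k ≤ M * (ε / lam) ^ k * lam ^ k := by
      refine mul_le_mul_of_nonneg_right ?_ (pow_nonneg hlam0.le k)
      rw [← Real.rpow_natCast μ (N 0 k)]; exact h2
    have h4 : M * (ε / lam) ^ k * lam ^ k = M * ε ^ k := by
      rw [mul_assoc, ← mul_pow, div_mul_cancel₀ _ hlam0.ne']
    calc (μ : ℝ) ^ (N 0 k) * lam ^ k * v 0 ≤ M * (ε / lam) ^ k * lam ^ k * v 0 :=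
          mul_le_mul_of_nonneg_right h3 (hv 0)
      _ = M * ε ^ k * v 0 := by rw [h4]
  have hterm2 : ∑ j ∈ Finset.range k, lam ^ (k - 1 - j) * μ ^ (N j k)
      ≤ M * (ε / lam) * (1 / (1 - ε)) := by
    have hb : ∀ j ∈ Finset.range k,
        lam ^ (k - 1 - j) * μ ^ (N j k) ≤ M * (ε / lam) * ε ^ (k - 1 - j) := by
      intro j hj
      rw [Finset.mem_range] at hj
      have h1 : (μ : ℝ) ^ (N j k) ≤ M * (ε / lam) ^ (k - j) := by
        rw [← Real.rpow_natCast μ (N j k)]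
        apply key _ (k - j)
        have := hsw j k hj.le
        rw [Nat.cast_sub hj.le]
        simpa [hN] using this
      have hkj : k - j = (k - 1 - j) + 1 := by omega
      calc lam ^ (k - 1 - j) * μ ^ (N j k)
          ≤ lam ^ (k - 1 - j) * (M * (ε / lam) ^ (k - j)) :=
            mul_le_mul_of_nonneg_left h1 (pow_nonneg hlam0.le _)
        _ = M * (ε / lam) * ε ^ (k - 1 - j) := by
            rw [hkj, pow_succ]
            rw [show lam ^ (k-1-j) * (M * ((ε/lam) ^ (k-1-j) * (ε/lam)))
                = M * (ε/lam) * (lam ^ (k-1-j) * (ε/lam) ^ (k-1-j)) from by ring,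
              ← mul_pow, mul_div_cancel₀ _ hlam0.ne']
    calc ∑ j ∈ Finset.range k, lam ^ (k - 1 - j) * μ ^ (N j k)
        ≤ ∑ j ∈ Finset.range k, M * (ε / lam) * ε ^ (k - 1 - j) :=
          Finset.sum_le_sum hb
      _ = M * (ε / lam) * ∑ j ∈ Finset.range k, ε ^ (k - 1 - j) := by
          rw [Finset.mul_sum]
      _ = M * (ε / lam) * ∑ j ∈ Finset.range k, ε ^ j := by
          rw [Finset.sum_range_reflect (fun j => ε ^ j) k]
      _ ≤ M * (ε / lam) * (1 / (1 - ε)) := by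
          exact mul_le_mul_of_nonneg_left hgeom (by positivity)
  calc v k ≤ (μ : ℝ) ^ (N 0 k) * lam ^ k * v 0 +
        c * ∑ j ∈ Finset.range k, lam ^ (k - 1 - j) * μ ^ (N j k) := main k
    _ ≤ M * ε ^ k * v 0 + (M * (ε / lam) * (1 / (1 - ε))) * c := by
        have := mul_le_mul_of_nonneg_left hterm2 hc
        linarith
end
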